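/- Ky Fan maximum principle: for a symmetric positive semidefinite matrix Σ in R^{n×n} with eigenvalues λ_1 ≥ ... ≥ λ_n, the supremum over all d-dimensional subspaces S of the trace of P_S Σ P_S (equivalently trace of Σ restricted to S) equals λ_1 + ... + λ_d. -/

import Mathlib

open MeasureTheory

open Finset

variable {n : ℕ}

noncomputable section

local notation "E" n => EuclideanSpace ℝ (Fin n)

/-- trace via orthonormal basis -/
lemma trace_eq_sum_inner_on (b : OrthonormalBasis (Fin n) ℝ (E n))
    (f : (E n) →ₗ[ℝ] (E n)) :
    LinearMap.trace ℝ (E n) f = ∑ i, inner ℝ (b i) (f (b i)) := by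
  rw [LinearMap.trace_eq_matrix_trace ℝ b.toBasis, Matrix.trace]
  congr 1
  ext i
  rw [Matrix.diag_apply, LinearMap.toMatrix_apply, b.coe_toBasis_repr_apply,
    b.repr_apply_apply, b.coe_toBasis]

/-- key inequality -/
lemma key_ineq (d : ℕ) (hd : d ≤ n) (lam t : Fin n → ℝ)
    (hmono : ∀ i j : Fin n, i ≤ j → lam j ≤ lam i)
    (ht0 : ∀ j, 0 ≤ t j) (ht1 : ∀ j, t j ≤ 1) (hsum : ∑ j, t j = d) :
    ∑ j, lam j * t j ≤ ∑ j ∈ univ.filter (fun i : Fin n => (i : ℕ) < d), lam j := by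
  rcases lt_or_eq_of_le hd with hdn | rfl
  · set c := lam ⟨d, hdn⟩ with hc
    have h1 : ∑ j, lam j * t j = ∑ j, (lam j - c) * t j + c * d := by
      rw [← hsum, Finset.mul_sum, ← Finset.sum_add_distrib]
      congr 1; ext j; ring
    have h2 : ∑ j ∈ univ.filter (fun i : Fin n => (i : ℕ) < d), lam j
        = ∑ j ∈ univ.filter (fun i : Fin n => (i : ℕ) < d), (lam j - c) + c * d := by
      have hcard : (univ.filter (fun i : Fin n => (i : ℕ) < d)).card = d := by
        have : univ.filter (fun i : Fin n => (i : ℕ) < d) = Finset.Iio ⟨d, hdn⟩ := by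
          ext i; simp [Fin.lt_def]
        rw [this, Fin.card_Iio]
      rw [Finset.sum_sub_distrib, Finset.sum_const, hcard]
      push_cast; ring
    rw [h1, h2]
    gcongr ?_ + _
    have hsplit : ∑ j, (lam j - c) * t j =
        ∑ j ∈ univ.filter (fun i : Fin n => (i : ℕ) < d), (lam j - c) * t j
        + ∑ j ∈ univ.filter (fun i : Fin n => ¬ (i : ℕ) < d), (lam j - c) * t j := by
      exact (Finset.sum_filter_add_sum_filter_not _ _ _).symm
    rw [hsplit]
    have hA : ∑ j ∈ univ.filter (fun i : Fin n => (i : ℕ) < d), (lam j - c) * t j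
        ≤ ∑ j ∈ univ.filter (fun i : Fin n => (i : ℕ) < d), (lam j - c) := by
      apply Finset.sum_le_sum
      intro j hj
      simp only [mem_filter] at hj
      have hcle : c ≤ lam j := hmono j ⟨d, hdn⟩ (by simpa [Fin.le_def] using hj.2.le)
      nlinarith [ht0 j, ht1 j]
    have hB : ∑ j ∈ univ.filter (fun i : Fin n => ¬ (i : ℕ) < d), (lam j - c) * t j ≤ 0 := by
      apply Finset.sum_nonpos
      intro j hj
      simp only [mem_filter, not_lt] at hj
      have : lam j ≤ c := hmono ⟨d, hdn⟩ j (by simpa [Fin.le_def] using hj.2)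
      nlinarith [ht0 j]
    linarith
  · have hall : ∀ j : Fin d, t j = 1 := by
      intro j
      by_contra h
      have hlt : t j < 1 := lt_of_le_of_ne (ht1 j) h
      have h2 : ∑ j : Fin d, t j < ∑ _j : Fin d, (1 : ℝ) :=
        Finset.sum_lt_sum (fun i _ => ht1 i) ⟨j, Finset.mem_univ j, hlt⟩
      rw [hsum] at h2
      simp at h2
    have hfilter : univ.filter (fun i : Fin d => (i : ℕ) < d) = univ := by
      ext i; simp [i.isLt]
    simp [hall, hfilter]

lemma inner_proj_eq_norm_sq (S : Submodule ℝ (E n)) (x : EuclideanSpace ℝ (Fin n)) :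
    inner ℝ x ((Submodule.orthogonalProjectionOnto S x : EuclideanSpace ℝ (Fin n)))
      = ‖(Submodule.orthogonalProjectionOnto S x : EuclideanSpace ℝ (Fin n))‖ ^ 2 := by
  set p : EuclideanSpace ℝ (Fin n) := (Submodule.orthogonalProjectionOnto S x : EuclideanSpace ℝ (Fin n))
  have h0 : inner ℝ (x - p) p = (0 : ℝ) :=
    Submodule.inner_left_of_mem_orthogonal (Submodule.orthogonalProjectionOnto S x).2
      (Submodule.sub_starProjection_mem_orthogonal x)
  have := real_inner_self_eq_norm_sq p
  have hx : (inner ℝ x p : ℝ) = inner ℝ p p + inner ℝ (x - p) p := by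
    rw [← inner_add_left, add_sub_cancel]
  rw [hx, h0, add_zero, real_inner_self_eq_norm_sq, sq]

lemma trace_PTP (S : Submodule ℝ (E n)) (Sig : Matrix (Fin n) (Fin n) ℝ)
    (hHerm : Sig.IsHermitian) :
    LinearMap.trace ℝ (EuclideanSpace ℝ (Fin n))
      ((S.subtype.comp (Submodule.orthogonalProjectionOnto S).toLinearMap).comp
        ((Matrix.toEuclideanLin Sig).comp
          (S.subtype.comp (Submodule.orthogonalProjectionOnto S).toLinearMap)))
    = ∑ j, hHerm.eigenvalues j *
        ‖(Submodule.orthogonalProjectionOnto S (hHerm.eigenvectorBasis j) : EuclideanSpace ℝ (Fin n))‖ ^ 2 := by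
  set b := hHerm.eigenvectorBasis
  set P : EuclideanSpace ℝ (Fin n) →ₗ[ℝ] EuclideanSpace ℝ (Fin n) :=
    S.subtype.comp (Submodule.orthogonalProjectionOnto S).toLinearMap with hP
  set T : EuclideanSpace ℝ (Fin n) →ₗ[ℝ] EuclideanSpace ℝ (Fin n) :=
    Matrix.toEuclideanLin Sig with hTdef
  have hPP : P * P = P := by
    ext x
    simp [hP, Module.End.mul_apply, Submodule.orthogonalProjectionOnto_mem_subspace_eq_self,
      Submodule.starProjection_eq_self_iff.mpr (S.starProjection_apply_mem x)]
  have hcomp : P.comp (T.comp P) = P * (T * P) := rfl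
  have htr : LinearMap.trace ℝ (EuclideanSpace ℝ (Fin n)) (P.comp (T.comp P))
      = LinearMap.trace ℝ (EuclideanSpace ℝ (Fin n)) (P * T) := by
    rw [hcomp, LinearMap.trace_mul_comm, mul_assoc, hPP, LinearMap.trace_mul_comm]
  rw [htr, trace_eq_sum_inner_on b]
  congr 1
  ext j
  have hT : T (b j) = hHerm.eigenvalues j • b j := by
    ext k
    have := congrFun (hHerm.mulVec_eigenvectorBasis j) k
    simpa [hTdef, Matrix.toEuclideanLin_apply] using this
  rw [Module.End.mul_apply, hT, _root_.map_smul]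
  have : (P (b j)) = (Submodule.orthogonalProjectionOnto S (b j) : EuclideanSpace ℝ (Fin n)) := rfl
  rw [real_inner_smul_right, this, inner_proj_eq_norm_sq]

lemma norm_sq_eq_sum_sq {F : Type*} [NormedAddCommGroup F] [InnerProductSpace ℝ F] {m : ℕ}
    (c : OrthonormalBasis (Fin m) ℝ F) (y : F) : ‖y‖ ^ 2 = ∑ k, (c.repr y k) ^ 2 := by
  rw [← c.repr.norm_map y, EuclideanSpace.norm_eq, Real.sq_sqrt (by positivity)]
  congr 1
  ext k
  rw [Real.norm_eq_abs, sq_abs]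

lemma parseval_sum (b : OrthonormalBasis (Fin n) ℝ (E n)) (x : EuclideanSpace ℝ (Fin n)) :
    ∑ j, (inner ℝ (b j) x : ℝ) ^ 2 = ‖x‖ ^ 2 := by
  rw [norm_sq_eq_sum_sq b x]
  congr 1
  ext j
  rw [b.repr_apply_apply]

lemma sum_norm_sq_proj (S : Submodule ℝ (E n)) (b : OrthonormalBasis (Fin n) ℝ (E n)) :
    ∑ j, ‖(Submodule.orthogonalProjectionOnto S (b j) : EuclideanSpace ℝ (Fin n))‖ ^ 2
      = (Module.finrank ℝ S : ℝ) := by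
  set c := stdOrthonormalBasis ℝ S
  have hterm : ∀ j, ‖(Submodule.orthogonalProjectionOnto S (b j) : EuclideanSpace ℝ (Fin n))‖ ^ 2
      = ∑ k, (inner ℝ ((c k : EuclideanSpace ℝ (Fin n))) (b j) : ℝ) ^ 2 := by
    intro j
    have h1 : ‖(Submodule.orthogonalProjectionOnto S (b j) : EuclideanSpace ℝ (Fin n))‖
        = ‖Submodule.orthogonalProjectionOnto S (b j)‖ := rfl
    rw [h1, norm_sq_eq_sum_sq c]
    congr 1
    ext k
    rw [c.repr_apply_apply, Submodule.inner_orthogonalProjectionOnto_eq_of_mem_left]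
  simp_rw [hterm]
  rw [Finset.sum_comm]
  have : ∀ k, ∑ j, (inner ℝ ((c k : EuclideanSpace ℝ (Fin n))) (b j) : ℝ) ^ 2 = 1 := by
    intro k
    have : ∀ j, (inner ℝ ((c k : EuclideanSpace ℝ (Fin n))) (b j) : ℝ)
        = inner ℝ (b j) ((c k : EuclideanSpace ℝ (Fin n))) := fun j => real_inner_comm _ _
    simp_rw [this]
    rw [parseval_sum b]
    have : ‖(c k : EuclideanSpace ℝ (Fin n))‖ = 1 := by
      have := c.orthonormal.1 k
      exact this
    rw [this]; norm_num
  rw [Finset.sum_congr rfl fun k _ => this k, Finset.sum_const, Finset.card_univ,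
    Fintype.card_fin, nsmul_eq_mul, mul_one]


end

section
open Finset

/-- Ky Fan maximum principle: for a real symmetric positive semidefinite matrix `Sig` with
eigenvalues listed in decreasing order, the supremum over all `d`-dimensional subspaces `S`
of the trace of `P_S ∘ Σ ∘ P_S` is attained and equals the sum of the `d` largest
eigenvalues. -/
theorem ky_fan_maximum_principle
    (n d : ℕ) (hd : d ≤ n)
    (Sig : Matrix (Fin n) (Fin n) ℝ)
    (hHerm : Sig.IsHermitian)
    (hPSD : Sig.PosSemidef)
    (hsorted : ∀ i j : Fin n, i ≤ j → hHerm.eigenvalues j ≤ hHerm.eigenvalues i) :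
    IsGreatest
      {x : ℝ | ∃ S : Submodule ℝ (EuclideanSpace ℝ (Fin n)),
        Module.finrank ℝ S = d ∧
        x = LinearMap.trace ℝ (EuclideanSpace ℝ (Fin n))
          ((S.subtype.comp (Submodule.orthogonalProjectionOnto S).toLinearMap).comp
            ((Matrix.toEuclideanLin Sig).comp
              (S.subtype.comp (Submodule.orthogonalProjectionOnto S).toLinearMap)))}
      (∑ i ∈ Finset.univ.filter (fun i : Fin n => (i : ℕ) < d), hHerm.eigenvalues i) := by
  
  set b := hHerm.eigenvectorBasis with hb
  constructor
  · -- membership: span of top d eigenvectors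
    set f : Fin d → EuclideanSpace ℝ (Fin n) := fun k => b (Fin.castLE hd k) with hf
    have hfon : Orthonormal ℝ f := b.orthonormal.comp _ (Fin.castLE_injective hd)
    set S₀ : Submodule ℝ (EuclideanSpace ℝ (Fin n)) := Submodule.span ℝ (Set.range f) with hS₀
    refine ⟨S₀, ?_, ?_⟩
    · rw [hS₀, finrank_span_eq_card hfon.linearIndependent, Fintype.card_fin]
    · rw [trace_PTP S₀ Sig hHerm]
      have hproj : ∀ j : Fin n,
          (Submodule.orthogonalProjectionOnto S₀ (b j) : EuclideanSpace ℝ (Fin n))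
            = if (j : ℕ) < d then b j else 0 := by
        intro j
        by_cases hj : (j : ℕ) < d
        · rw [if_pos hj]
          apply Submodule.starProjection_eq_self_iff.mpr
          apply Submodule.subset_span
          exact ⟨⟨(j : ℕ), hj⟩, by simp [hf, Fin.ext_iff]⟩
        · rw [if_neg hj]
          have hmem : b j ∈ S₀ᗮ := by
            rw [Submodule.mem_orthogonal]
            intro u hu
            induction hu using Submodule.span_induction with
            | mem x hx =>
              obtain ⟨k, rfl⟩ := hx
              apply b.orthonormal.2
              intro h
              apply hj
              rw [← h]
              simpa using k.isLt
            | zero => simp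
            | add x y _ _ hx hy => rw [inner_add_left, hx, hy, add_zero]
            | smul a x _ hx => rw [inner_smul_left, hx, mul_zero]
          rw [Submodule.orthogonalProjectionOnto_apply_of_mem_orthogonal hmem,
            Submodule.coe_zero]
      have : ∀ j : Fin n,
          hHerm.eigenvalues j * ‖(Submodule.orthogonalProjectionOnto S₀ (b j) : EuclideanSpace ℝ (Fin n))‖ ^ 2
          = if (j : ℕ) < d then hHerm.eigenvalues j else 0 := by
        intro j
        rw [hproj j]
        by_cases hj : (j : ℕ) < d
        · rw [if_pos hj, if_pos hj]
          have : ‖b j‖ = 1 := b.orthonormal.1 j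
          rw [this]; ring
        · rw [if_neg hj, if_neg hj]; simp
      rw [Finset.sum_congr rfl fun j _ => this j, ← Finset.sum_filter]
  · -- upper bound
    rintro x ⟨S, hrank, rfl⟩
    rw [trace_PTP S Sig hHerm]
    apply key_ineq d hd _ _ hsorted
    · intro j; positivity
    · intro j
      have h1 : ‖(Submodule.orthogonalProjectionOnto S (b j) : EuclideanSpace ℝ (Fin n))‖ ≤ 1 := by
        have h2 : ‖(Submodule.orthogonalProjectionOnto S (b j) : EuclideanSpace ℝ (Fin n))‖
            = ‖Submodule.orthogonalProjectionOnto S (b j)‖ := rfl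
        rw [h2]
        calc ‖Submodule.orthogonalProjectionOnto S (b j)‖ ≤ ‖Submodule.orthogonalProjectionOnto S‖ * ‖b j‖ :=
              (Submodule.orthogonalProjectionOnto S).le_opNorm (b j)
          _ ≤ 1 * 1 := by
              apply mul_le_mul (Submodule.orthogonalProjectionOnto_norm_le S) (le_of_eq (b.orthonormal.1 j))
                (norm_nonneg _) zero_le_one
          _ = 1 := one_mul 1
      nlinarith [norm_nonneg ((Submodule.orthogonalProjectionOnto S (b j) : EuclideanSpace ℝ (Fin n)))]
    · rw [sum_norm_sq_proj S b, hrank]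

end
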